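/- Safe sphere test: let θ̂ be the dual optimal Lasso solution and suppose θ̂ ∈ B(c, r) for some c ∈ ℝⁿ, r ≥ 0. If |x_jᵀc| + r‖x_j‖ < 1, then β̂_j = 0 for every primal optimal solution β̂. -/

import Mathlib

open scoped BigOperators

lemma lasso_one_side (C lam b g : ℝ) (hC : 0 ≤ C) (hlam : 0 < lam)
    (h : ∀ t : ℝ, t * g - t^2/2 * C ≤ lam * (|b + t| - |b|)) : g ≤ lam := by
  apply le_of_forall_pos_le_add
  intro ε hε
  set t : ℝ := 2 * ε / (C + 1) with ht
  have htpos : 0 < t := by positivity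
  have h1 := h t
  have h2 : |b + t| - |b| ≤ t := by
    have h2' : |b + t| - |b| ≤ |t| := by
      have := abs_sub_abs_le_abs_sub (b + t) b
      simpa using this
    simpa [abs_of_pos htpos] using h2'
  have h3 : t * g - t^2/2 * C ≤ lam * t := le_trans h1 (by nlinarith)
  have h4 : g ≤ lam + t * C / 2 := by nlinarith
  have h5 : t * C / 2 ≤ ε := by
    have he : t * C / 2 = ε * C / (C + 1) := by rw [ht]; field_simp
    rw [he, div_le_iff₀ (by positivity : (0:ℝ) < C + 1)]
    nlinarith
  linarith

lemma lasso_pos_side (C lam b g : ℝ) (hC : 0 ≤ C) (hlam : 0 < lam) (hb : 0 < b)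
    (h : ∀ t : ℝ, t * g - t^2/2 * C ≤ lam * (|b + t| - |b|)) : lam ≤ g := by
  apply le_of_forall_pos_le_add
  intro ε hε
  set s : ℝ := min (2 * ε / (C + 1)) (b / 2) with hs
  have hspos : 0 < s := lt_min (by positivity) (by positivity)
  have hsb : s ≤ b / 2 := min_le_right _ _
  have h1 := h (-s)
  have habs : |b + -s| - |b| = -s := by
    rw [abs_of_pos hb, abs_of_pos (by linarith : 0 < b + -s)]; ring
  rw [habs] at h1
  have h4 : lam ≤ g + s * C / 2 := by nlinarith
  have h5 : s * C / 2 ≤ ε := by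
    have hsle : s ≤ 2 * ε / (C + 1) := min_le_left _ _
    have h6 : s * C / 2 ≤ (2 * ε / (C + 1)) * C / 2 := by
      apply div_le_div_of_nonneg_right _ (by norm_num)
      · exact mul_le_mul_of_nonneg_right hsle hC
    have he : (2 * ε / (C + 1)) * C / 2 = ε * C / (C + 1) := by field_simp
    rw [he] at h6
    refine h6.trans ?_
    rw [div_le_iff₀ (by positivity : (0:ℝ) < C + 1)]
    nlinarith
  linarith

lemma lasso_scalar (C lam b g : ℝ) (hC : 0 ≤ C) (hlam : 0 < lam)
    (h : ∀ t : ℝ, t * g - t^2/2 * C ≤ lam * (|b + t| - |b|)) :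
    |g| ≤ lam ∧ b * g = lam * |b| := by
  have hsym : ∀ t : ℝ, t * (-g) - t^2/2 * C ≤ lam * (|(-b) + t| - |(-b)|) := by
    intro t
    have h0 := h (-t)
    have e1 : |(-b) + t| = |b + -t| := by rw [← abs_neg]; ring_nf
    rw [e1, abs_neg]
    nlinarith [h0]
  have hle : g ≤ lam := lasso_one_side C lam b g hC hlam h
  have hge : -g ≤ lam := lasso_one_side C lam (-b) (-g) hC hlam hsym
  refine ⟨abs_le.2 ⟨by linarith, hle⟩, ?_⟩
  rcases lt_trichotomy b 0 with hb | hb | hb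
  · have := lasso_pos_side C lam (-b) (-g) hC hlam (by linarith) hsym
    rw [abs_of_neg hb]; nlinarith
  · simp [hb]
  · have := lasso_pos_side C lam b g hC hlam hb h
    rw [abs_of_pos hb]; nlinarith

def toE {n : ℕ} (v : Fin n → ℝ) : EuclideanSpace ℝ (Fin n) := WithLp.toLp 2 v

set_option maxHeartbeats 1000000 in
/-- Safe sphere test. If the dual optimal solution `θ̂` (the projection
of `y/λ` onto the dual feasible set) lies in the ball `B(c, r)` and
`|x_jᵀc| + r‖x_j‖ < 1`, then `β̂_j = 0` for every primal optimal `β̂`. -/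
theorem lasso_safe_sphere_test {n p : ℕ}
    (X : Matrix (Fin n) (Fin p) ℝ) (y : EuclideanSpace ℝ (Fin n))
    (lam : ℝ) (hlam : 0 < lam)
    (Δ : Set (EuclideanSpace ℝ (Fin n)))
    (hΔ : Δ = {θ | ∀ j, |∑ i, X i j * θ i| ≤ 1})
    (P : (Fin p → ℝ) → ℝ)
    (hP : ∀ β, P β = (1/2) * ‖toE (X.mulVec β) - y‖^2 + lam * ∑ j, |β j|)
    (θh : EuclideanSpace ℝ (Fin n))
    (hfeas : θh ∈ Δ)
    (hproj : ∀ θ ∈ Δ, ‖θh - (1/lam) • y‖ ≤ ‖θ - (1/lam) • y‖)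
    (c : EuclideanSpace ℝ (Fin n)) (r : ℝ) (hr : 0 ≤ r)
    (hball : ‖θh - c‖ ≤ r)
    (j : Fin p)
    (htest : |∑ i, X i j * c i| + r * ‖toE (fun i => X i j)‖ < 1) :
    ∀ βh : Fin p → ℝ, (∀ β, P βh ≤ P β) → βh j = 0 := by
  intro βh hopt
  by_contra hbj
  -- basic inner-product facts
  have hinner : ∀ (a b : EuclideanSpace ℝ (Fin n)), (inner ℝ a b : ℝ) = ∑ i, a i * b i := by
    intro a b
    simp [PiLp.inner_apply, RCLike.inner_apply, mul_comm]
  set xcol : Fin p → EuclideanSpace ℝ (Fin n) := fun k => toE (fun i => X i k) with hxcol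
  set v : EuclideanSpace ℝ (Fin n) := toE (X.mulVec βh) - y with hv
  set g : Fin p → ℝ := fun k => -(inner ℝ v (xcol k) : ℝ) with hg
  -- key first-order inequality from optimality
  have hkey : ∀ k, ∀ t : ℝ, t * g k - t^2/2 * ‖xcol k‖^2 ≤ lam * (|βh k + t| - |βh k|) := by
    intro k t
    have h1 := hopt (fun l => βh l + t * if l = k then 1 else 0)
    rw [hP, hP] at h1
    have hmv : toE (X.mulVec (fun l => βh l + t * if l = k then 1 else 0)) - y
        = v + t • xcol k := by
      ext i
      simp only [toE, hv, PiLp.toLp_apply, PiLp.sub_apply, PiLp.add_apply, PiLp.smul_apply, smul_eq_mul, hxcol]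
      have h2 : X.mulVec (fun l => βh l + t * if l = k then 1 else 0) i
          = X.mulVec βh i + t * X i k := by
        simp [Matrix.mulVec, dotProduct, mul_add, Finset.sum_add_distrib, mul_ite,
          mul_one, mul_zero, ite_mul, zero_mul, Finset.sum_ite_eq', mul_comm, mul_left_comm]
      rw [h2]; ring
    rw [hmv] at h1
    have hnorm : ‖v + t • xcol k‖^2 = ‖v‖^2 + 2 * (t * (inner ℝ v (xcol k) : ℝ)) + t^2 * ‖xcol k‖^2 := by
      rw [norm_add_sq_real, real_inner_smul_right, norm_smul]
      simp [mul_pow, sq_abs]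
    rw [hnorm] at h1
    have hsum : ∑ l, |βh l + t * if l = k then 1 else 0|
        = (∑ l, |βh l|) + (|βh k + t| - |βh k|) := by
      have : ∑ l, (|βh l + t * if l = k then 1 else 0| - |βh l|) = |βh k + t| - |βh k| := by
        rw [Finset.sum_eq_single k]
        · simp
        · intro l _ hl; simp [hl]
        · simp
      have h2 : ∑ l, (|βh l + t * if l = k then 1 else 0| - |βh l|)
          = (∑ l, |βh l + t * if l = k then 1 else 0|) - ∑ l, |βh l| := by
        rw [Finset.sum_sub_distrib]
      linarith [this, h2.symm]
    rw [hsum] at h1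
    simp only [hg]
    nlinarith [h1]
  have habs : ∀ k, |g k| ≤ lam ∧ βh k * g k = lam * |βh k| := fun k =>
    lasso_scalar (‖xcol k‖^2) lam (βh k) (g k) (by positivity) hlam (hkey k)
  -- the dual point θ
  set θ : EuclideanSpace ℝ (Fin n) := (1/lam) • (y - toE (X.mulVec βh)) with hθdef
  have hvneg : (y - toE (X.mulVec βh)) = -v := by rw [hv]; abel
  have hgθ : ∀ u : EuclideanSpace ℝ (Fin n), ∀ k, (inner ℝ (xcol k) u : ℝ) = ∑ i, X i k * u i := by
    intro u k
    rw [hinner]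
    rfl
  have hθinner : ∀ k, (inner ℝ (xcol k) θ : ℝ) = g k / lam := by
    intro k
    rw [hθdef, real_inner_smul_right, hvneg, inner_neg_right, real_inner_comm]
    simp only [hg]
    field_simp
  have hθΔ : θ ∈ Δ := by
    rw [hΔ]
    intro k
    rw [← hgθ θ k, hθinner k, abs_div, abs_of_pos hlam, div_le_one hlam]
    exact (habs k).1
  -- inner product of Xβh with dual points
  have hswap : ∀ u : EuclideanSpace ℝ (Fin n),
      (inner ℝ (toE (X.mulVec βh)) u : ℝ) = ∑ l, βh l * (inner ℝ (xcol l) u : ℝ) := by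
    intro u
    rw [hinner]
    simp only [hgθ]
    simp only [toE, PiLp.toLp_apply, Matrix.mulVec, dotProduct, Finset.sum_mul, Finset.mul_sum]
    rw [Finset.sum_comm]
    apply Finset.sum_congr rfl
    intro l _
    apply Finset.sum_congr rfl
    intro i _
    ring
  have hXθ : (inner ℝ (toE (X.mulVec βh)) θ : ℝ) = ∑ l, |βh l| := by
    rw [hswap]
    apply Finset.sum_congr rfl
    intro l _
    rw [hθinner l]
    have := (habs l).2
    field_simp
    linarith [this]
  have hXθh : (inner ℝ (toE (X.mulVec βh)) θh : ℝ) ≤ ∑ l, |βh l| := by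
    rw [hswap]
    apply Finset.sum_le_sum
    intro l _
    have h1 : |(inner ℝ (xcol l) θh : ℝ)| ≤ 1 := by
      rw [hgθ θh l]
      rw [hΔ] at hfeas
      exact hfeas l
    calc βh l * (inner ℝ (xcol l) θh : ℝ) ≤ |βh l * (inner ℝ (xcol l) θh : ℝ)| := le_abs_self _
      _ = |βh l| * |(inner ℝ (xcol l) θh : ℝ)| := abs_mul _ _
      _ ≤ |βh l| * 1 := mul_le_mul_of_nonneg_left h1 (abs_nonneg _)
      _ = |βh l| := mul_one _
  -- θ = θh by projection characterization
  set z : EuclideanSpace ℝ (Fin n) := (1/lam) • y with hz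
  have hθz : θ - z = -((1/lam) • toE (X.mulVec βh)) := by
    rw [hθdef, hz, smul_sub]; abel
  have hinpos : 0 ≤ (inner ℝ (θ - z) (θh - θ) : ℝ) := by
    rw [hθz, inner_neg_left, real_inner_smul_left, inner_sub_right, hXθ]
    have := hXθh
    have h1 : (inner ℝ (toE (X.mulVec βh)) θh : ℝ) - (∑ l, |βh l|) ≤ 0 := by linarith
    have h2 : 0 < 1/lam := by positivity
    nlinarith
  have hθeq : θh = θ := by
    have hexp : ‖θh - z‖^2 = ‖θ - z‖^2 + 2 * (inner ℝ (θ - z) (θh - θ) : ℝ) + ‖θh - θ‖^2 := by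
      have : θh - z = (θ - z) + (θh - θ) := by abel
      rw [this, norm_add_sq_real]
    have hle := hproj θ hθΔ
    have h1 : ‖θh - z‖^2 ≤ ‖θ - z‖^2 := by
      have h0 : (0:ℝ) ≤ ‖θ - z‖ := norm_nonneg _
      nlinarith [hle, norm_nonneg (θh - z)]
    have h2 : ‖θh - θ‖^2 ≤ 0 := by nlinarith [hexp]
    have h3 : ‖θh - θ‖ = 0 := by nlinarith [norm_nonneg (θh - θ), sq_nonneg ‖θh - θ‖]
    have := norm_eq_zero.mp h3
    rwa [sub_eq_zero] at this
  -- final contradiction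
  have hgj : |g j| = lam := by
    have h1 := (habs j).2
    have h2 : |βh j| * |g j| = lam * |βh j| := by rw [← abs_mul, h1, abs_mul, abs_of_pos hlam, abs_abs]
    have h3 : 0 < |βh j| := abs_pos.mpr hbj
    have h4 : |βh j| * |g j| = |βh j| * lam := by linarith [h2]
    exact mul_left_cancel₀ (ne_of_gt h3) h4
  have hθj : |(inner ℝ (xcol j) θ : ℝ)| = 1 := by
    rw [hθinner j, abs_div, hgj, abs_of_pos hlam, div_self (ne_of_gt hlam)]
  have hCS : |(inner ℝ (xcol j) (θh - c) : ℝ)| ≤ ‖xcol j‖ * r := by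
    calc |(inner ℝ (xcol j) (θh - c) : ℝ)| ≤ ‖xcol j‖ * ‖θh - c‖ := abs_real_inner_le_norm _ _
      _ ≤ ‖xcol j‖ * r := mul_le_mul_of_nonneg_left hball (norm_nonneg _)
  have hsub : (inner ℝ (xcol j) (θh - c) : ℝ) = (inner ℝ (xcol j) θh : ℝ) - (inner ℝ (xcol j) c : ℝ) :=
    inner_sub_right _ _ _
  have hsplit : (inner ℝ (xcol j) θ : ℝ) = (inner ℝ (xcol j) c : ℝ) + (inner ℝ (xcol j) (θh - c) : ℝ) := by
    rw [← hθeq] ; linarith [hsub]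
  have hc : (inner ℝ (xcol j) c : ℝ) = ∑ i, X i j * c i := hgθ c j
  have hfinal : |(inner ℝ (xcol j) θ : ℝ)| < 1 := by
    rw [hsplit]
    calc |(inner ℝ (xcol j) c : ℝ) + (inner ℝ (xcol j) (θh - c) : ℝ)|
        ≤ |(inner ℝ (xcol j) c : ℝ)| + |(inner ℝ (xcol j) (θh - c) : ℝ)| := abs_add_le _ _
      _ ≤ |∑ i, X i j * c i| + ‖xcol j‖ * r := by rw [hc]; linarith [hCS]
      _ < 1 := by rw [hxcol]; linarith [htest, mul_comm r ‖toE (fun i => X i j)‖]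
  rw [hθj] at hfinal
  exact absurd hfinal (by norm_num)
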